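/- Let matrices B_k, …, B_{k+n} and J_k, …, J_{k+n−1} in ℝ^{n×n} and vectors s_k, …, s_{k+n−1} satisfy B_{t+1} = AAA(B_t, J_t, s_t) for k ≤ t ≤ k+n−1, where the set {s_k, …, s_{k+n−1}} equals the standard basis {e_1, …, e_n} of ℝⁿ (all n directions pairwise distinct basis vectors). Then for any matrix A ∈ ℝ^{n×n}, ‖B_{k+n} − A‖_F ≤ √n · Σ_{t=k}^{k+n−1} ‖J_t − A‖_F. -/

import Mathlib

open Matrix MeasureTheory ProbabilityTheory Finset

/-- Euclidean norm of a vector in ℝⁿ. -/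
noncomputable def enorm' {n : ℕ} (v : Fin n → ℝ) : ℝ := Real.sqrt (∑ i, (v i) ^ 2)

/-- Frobenius norm of a real n×n matrix. -/
noncomputable def frob {n : ℕ} (A : Matrix (Fin n) (Fin n) ℝ) : ℝ :=
  Real.sqrt (∑ i, ∑ j, (A i j) ^ 2)

/-- Spectral (ℓ₂ operator) norm of a real n×n matrix. -/
noncomputable def opNorm' {n : ℕ} (A : Matrix (Fin n) (Fin n) ℝ) : ℝ :=
  ‖Matrix.toEuclideanCLM (𝕜 := ℝ) A‖

/-- The AAA update: AAA(B,J,s) = B + ((J−B) s sᵀ (J−B)ᵀ / (sᵀ(J−B)ᵀ(J−B)s)) (J−B)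
if (J−B)s ≠ 0, and B otherwise. -/
noncomputable def AAAupd {n : ℕ} (B J : Matrix (Fin n) (Fin n) ℝ) (s : Fin n → ℝ) :
    Matrix (Fin n) (Fin n) ℝ :=
  if (J - B).mulVec s = 0 then B
  else B + (((J - B).mulVec s) ⬝ᵥ ((J - B).mulVec s))⁻¹ •
      (Matrix.vecMulVec ((J - B).mulVec s) ((J - B).mulVec s) * (J - B))

/-- `s` is a standard basis vector maximizing ‖R e_i‖ over the standard basis. -/
noncomputable def IsGreedy {n : ℕ} (R : Matrix (Fin n) (Fin n) ℝ) (s : Fin n → ℝ) : Prop :=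
  ∃ i : Fin n, s = Pi.single i 1 ∧
    ∀ j : Fin n, enorm' (R.mulVec (Pi.single j 1)) ≤ enorm' (R.mulVec (Pi.single i 1))

/-- `P` is the orthogonal-projection matrix onto the subspace `V` of ℝⁿ
(symmetric, idempotent, range `V`, identity on `V`). -/
def IsOrthProj {n : ℕ} (P : Matrix (Fin n) (Fin n) ℝ) (V : Submodule ℝ (Fin n → ℝ)) : Prop :=
  P.IsSymm ∧ P * P = P ∧ (∀ v, P.mulVec v ∈ V) ∧ (∀ v ∈ V, P.mulVec v = v)

/-- Standard Gaussian measure on ℝⁿ: the n-fold product of N(0,1). -/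
noncomputable def stdGaussianPi (n : ℕ) : MeasureTheory.Measure (Fin n → ℝ) :=
  MeasureTheory.Measure.pi fun _ => ProbabilityTheory.gaussianReal 0 1

lemma enorm'_eq {n : ℕ} (v : Fin n → ℝ) :
    enorm' v = ‖(WithLp.toLp 2 v : EuclideanSpace ℝ (Fin n))‖ := by
  rw [EuclideanSpace.norm_eq, enorm']
  congr 1
  apply Finset.sum_congr rfl
  intro i _
  rw [Real.norm_eq_abs, sq_abs]

lemma dot_eq {n : ℕ} (u v : Fin n → ℝ) :
    u ⬝ᵥ v = inner (𝕜 := ℝ) (WithLp.toLp 2 u : EuclideanSpace ℝ (Fin n))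
      (WithLp.toLp 2 v : EuclideanSpace ℝ (Fin n)) := by
  rw [PiLp.inner_apply, dotProduct]
  apply Finset.sum_congr rfl
  intro i _
  simp [RCLike.inner_apply, mul_comm]

lemma enorm'_nonneg {n : ℕ} (v : Fin n → ℝ) : 0 ≤ enorm' v := Real.sqrt_nonneg _

lemma proj_norm_le {n : ℕ} (u y : EuclideanSpace ℝ (Fin n)) :
    ‖((inner ℝ u y / inner ℝ u u : ℝ)) • u‖ ≤ ‖y‖ := by
  by_cases hu : u = 0
  · simp [hu]
  · have h1 : (inner ℝ u u : ℝ) = ‖u‖ ^ 2 := real_inner_self_eq_norm_sq u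
    have hun : (0:ℝ) < ‖u‖ := norm_pos_iff.mpr hu
    rw [norm_smul, Real.norm_eq_abs, abs_div, h1, abs_of_nonneg (sq_nonneg ‖u‖)]
    rw [div_mul_eq_mul_div, div_le_iff₀ (by positivity)]
    have := abs_real_inner_le_norm u y
    nlinarith [norm_nonneg y]

lemma perp_norm_le {n : ℕ} (u x : EuclideanSpace ℝ (Fin n)) :
    ‖x - ((inner ℝ u x / inner ℝ u u : ℝ)) • u‖ ≤ ‖x‖ := by
  by_cases hu : u = 0
  · simp [hu]
  · set c : ℝ := inner ℝ u x / inner ℝ u u with hc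
    have hun : (0:ℝ) < ‖u‖ := norm_pos_iff.mpr hu
    have huu : (inner ℝ u u : ℝ) ≠ 0 := by
      rw [real_inner_self_eq_norm_sq]; exact (pow_pos hun 2).ne'
    have horth : (inner ℝ (x - c • u) (c • u) : ℝ) = 0 := by
      rw [inner_sub_left, real_inner_smul_right, real_inner_smul_left,
        real_inner_smul_right, real_inner_comm u x, hc, div_mul_cancel₀ _ huu]
      exact sub_self _
    have hpy : ‖x‖ ^ 2 = ‖x - c • u‖ ^ 2 + ‖c • u‖ ^ 2 := by
      have h := norm_add_sq_real (x - c • u) (c • u)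
      simp only [sub_add_cancel] at h
      rw [h, horth]; ring
    nlinarith [norm_nonneg (x - c • u), norm_nonneg x, norm_nonneg (c • u)]

lemma key_ineq {n : ℕ} (u x y : Fin n → ℝ) :
    enorm' (x + ((u ⬝ᵥ y - u ⬝ᵥ x) / (u ⬝ᵥ u)) • u) ≤ enorm' x + enorm' y := by
  have h : x + ((u ⬝ᵥ y - u ⬝ᵥ x) / (u ⬝ᵥ u)) • u
      = (x - ((u ⬝ᵥ x) / (u ⬝ᵥ u)) • u) + ((u ⬝ᵥ y) / (u ⬝ᵥ u)) • u := by
    rw [sub_div, sub_smul]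
    abel
  rw [h, enorm'_eq, enorm'_eq, enorm'_eq, dot_eq u x, dot_eq u y, dot_eq u u]
  exact le_trans (norm_add_le (E := EuclideanSpace ℝ (Fin n)) _ _)
    (add_le_add (perp_norm_le _ _) (proj_norm_le _ _))

lemma vecMulVec_mulVec' {n : ℕ} (a b w : Fin n → ℝ) :
    (Matrix.vecMulVec a b).mulVec w = (b ⬝ᵥ w) • a := by
  funext i
  simp only [Matrix.mulVec, Matrix.vecMulVec_apply, dotProduct, Pi.smul_apply,
    smul_eq_mul, Finset.sum_mul]
  exact Finset.sum_congr rfl fun j _ => by ring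

lemma step_col {n : ℕ} (Bt J A : Matrix (Fin n) (Fin n) ℝ) (s v : Fin n → ℝ) :
    enorm' ((AAAupd Bt J s - A).mulVec v) ≤
      enorm' ((Bt - A).mulVec v) + enorm' ((J - A).mulVec v) := by
  unfold AAAupd
  by_cases h : (J - Bt).mulVec s = 0
  · simp only [if_pos h]
    linarith [enorm'_nonneg ((J - A).mulVec v)]
  · simp only [if_neg h]
    set u := (J - Bt).mulVec s with hu
    have hsub : J - Bt = (J - A) - (Bt - A) := by abel
    have hcol : (Bt + (u ⬝ᵥ u)⁻¹ • (Matrix.vecMulVec u u * (J - Bt)) - A).mulVec v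
        = (Bt - A).mulVec v +
          ((u ⬝ᵥ ((J - A).mulVec v) - u ⬝ᵥ ((Bt - A).mulVec v)) / (u ⬝ᵥ u)) • u := by
      rw [add_sub_right_comm, Matrix.add_mulVec, Matrix.smul_mulVec,
        ← Matrix.mulVec_mulVec, vecMulVec_mulVec', hsub, smul_smul, inv_mul_eq_div]
      simp [Matrix.sub_mulVec, dotProduct_sub]
    rw [hcol]
    exact key_ineq u ((Bt - A).mulVec v) ((J - A).mulVec v)

lemma AAAupd_mulVec_self {n : ℕ} (Bt J : Matrix (Fin n) (Fin n) ℝ) (s : Fin n → ℝ) :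
    (AAAupd Bt J s).mulVec s = J.mulVec s := by
  unfold AAAupd
  by_cases h : (J - Bt).mulVec s = 0
  · simp only [if_pos h]
    rw [Matrix.sub_mulVec, sub_eq_zero] at h
    exact h.symm
  · simp only [if_neg h]
    set u := (J - Bt).mulVec s with hu
    have hc : u ⬝ᵥ u ≠ 0 := by
      intro h0
      exact h (dotProduct_self_eq_zero.mp h0)
    rw [Matrix.add_mulVec, Matrix.smul_mulVec, ← Matrix.mulVec_mulVec,
      vecMulVec_mulVec', ← hu, smul_smul, inv_mul_cancel₀ hc, one_smul, hu,
      Matrix.sub_mulVec]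
    abel

lemma enorm'_col_le_frob {n : ℕ} (M : Matrix (Fin n) (Fin n) ℝ) (j : Fin n) :
    enorm' (M.mulVec (Pi.single j 1)) ≤ frob M := by
  unfold enorm' frob
  apply Real.sqrt_le_sqrt
  have hcol : ∀ i, M.mulVec (Pi.single j 1) i = M i j := by
    intro i
    rw [Matrix.mulVec_single]
    simp
  calc ∑ i, (M.mulVec (Pi.single j 1) i) ^ 2 = ∑ i, (M i j) ^ 2 := by
        exact Finset.sum_congr rfl fun i _ => by rw [hcol]
    _ ≤ ∑ i, ∑ j', (M i j') ^ 2 :=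
        Finset.sum_le_sum fun i _ =>
          Finset.single_le_sum (f := fun j' => (M i j') ^ 2)
            (fun _ _ => sq_nonneg _) (Finset.mem_univ j)


theorem stmt_18 {n : ℕ} (B Jm : ℕ → Matrix (Fin n) (Fin n) ℝ) (s : ℕ → Fin n → ℝ)
    (k : ℕ)
    (hupd : ∀ t, k ≤ t → t < k + n → B (t + 1) = AAAupd (B t) (Jm t) (s t))
    (hbasis : ∀ t, k ≤ t → t < k + n → ∃ j : Fin n, s t = Pi.single j 1)
    (hall : ∀ j : Fin n, ∃ t, k ≤ t ∧ t < k + n ∧ s t = Pi.single j 1)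
    (A : Matrix (Fin n) (Fin n) ℝ) :
    frob (B (k + n) - A) ≤
      Real.sqrt n * ∑ t ∈ Finset.Ico k (k + n), frob (Jm t - A) := by
  set S := ∑ t ∈ Finset.Ico k (k + n), frob (Jm t - A) with hS
  have hS0 : 0 ≤ S := Finset.sum_nonneg fun t _ => Real.sqrt_nonneg _
  -- per-column bound
  have hcolbound : ∀ j : Fin n, enorm' ((B (k + n) - A).mulVec (Pi.single j 1)) ≤ S := by
    intro j
    obtain ⟨t0, ht0k, ht0n, hst0⟩ := hall j
    have H : ∀ m, t0 + 1 ≤ m → m ≤ k + n →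
        enorm' ((B m - A).mulVec (Pi.single j 1)) ≤
          ∑ t ∈ Finset.Ico t0 m, frob (Jm t - A) := by
      intro m hm
      induction m, hm using Nat.le_induction with
      | base =>
        intro _
        have hB : B (t0 + 1) = AAAupd (B t0) (Jm t0) (s t0) := hupd t0 ht0k ht0n
        have hcol : (B (t0 + 1) - A).mulVec (Pi.single j 1)
            = (Jm t0 - A).mulVec (Pi.single j 1) := by
          rw [Matrix.sub_mulVec, Matrix.sub_mulVec, hB, ← hst0,
            AAAupd_mulVec_self]
        rw [hcol, Finset.sum_Ico_eq_sum_range]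
        simp only [Nat.add_sub_cancel_left]
        rw [Finset.sum_range_one]
        exact enorm'_col_le_frob _ j
      | succ m hm ih =>
        intro hmn
        have hkm : k ≤ m := le_trans ht0k (le_trans (Nat.le_succ t0) hm)
        have hmn' : m < k + n := by omega
        have hB : B (m + 1) = AAAupd (B m) (Jm m) (s m) := hupd m hkm hmn'
        have hstep := step_col (B m) (Jm m) A (s m) (Pi.single j 1)
        rw [← hB] at hstep
        have hih := ih (by omega)
        have hsum : ∑ t ∈ Finset.Ico t0 (m + 1), frob (Jm t - A)
            = (∑ t ∈ Finset.Ico t0 m, frob (Jm t - A)) + frob (Jm m - A) :=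
          Finset.sum_Ico_succ_top (by omega) _
        rw [hsum]
        exact le_trans hstep (add_le_add hih (enorm'_col_le_frob _ j))
    have hle := H (k + n) (by omega) (le_refl _)
    refine le_trans hle ?_
    exact Finset.sum_le_sum_of_subset_of_nonneg
      (Finset.Ico_subset_Ico ht0k (le_refl _))
      (fun t _ _ => Real.sqrt_nonneg _)
  -- assemble Frobenius norm from columns
  have hfr : frob (B (k + n) - A)
      = Real.sqrt (∑ j, (enorm' ((B (k + n) - A).mulVec (Pi.single j 1))) ^ 2) := by
    unfold frob
    congr 1
    rw [Finset.sum_comm]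
    apply Finset.sum_congr rfl
    intro j _
    rw [enorm', Real.sq_sqrt (Finset.sum_nonneg fun i _ => sq_nonneg _)]
    apply Finset.sum_congr rfl
    intro i _
    congr 1
    rw [Matrix.mulVec_single]
    simp
  rw [hfr]
  have hbound : ∑ j, (enorm' ((B (k + n) - A).mulVec (Pi.single j 1))) ^ 2
      ≤ ∑ _j : Fin n, S ^ 2 :=
    Finset.sum_le_sum fun j _ =>
      pow_le_pow_left₀ (enorm'_nonneg _) (hcolbound j) 2
  refine le_trans (Real.sqrt_le_sqrt hbound) ?_
  rw [Finset.sum_const, Finset.card_univ, Fintype.card_fin, nsmul_eq_mul,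
    Real.sqrt_mul (by positivity), Real.sqrt_sq hS0]
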